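/- Let n, k ≥ 1 and let δ₀, δ₁, …, δ_k ∈ ℤⁿ satisfy Σ_{i=0}^{k} δ_i = 0 and δ_i ≠ 0 for every i ∈ {0,1,…,k}. Let α₁, …, α_k ∈ ℂ be pairwise distinct, let κ₁, …, κₙ ∈ ℂ∖{0}, set S = ℂ∖{α₁,…,α_k}, and define f : S → (ℂ∖{0})ⁿ by f(z)_j = κ_j·∏_{i=1}^{k}(z−α_i)^{−δ_i^j}. Then the map Log ∘ f : S → ℝⁿ is proper (preimages of compact sets are compact), and in particular the amoeba Log(f(S)) is a closed subset of ℝⁿ. -/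

import Mathlib

open Filter Topology Set

/-- Coordinate-wise logarithm of moduli, `Log(z)_i = log |z_i|`. -/
noncomputable def LogMap {n : ℕ} (z : Fin n → ℂ) : Fin n → ℝ :=
  fun i => Real.log ‖z i‖

noncomputable def Complex.abs : AbsoluteValue ℂ ℝ := IsAbsoluteValue.toAbsoluteValue (norm : ℂ → ℝ)

theorem Complex.norm_eq_abs (z : ℂ) : ‖z‖ = Complex.abs z := rfl

theorem Complex.continuous_abs : Continuous Complex.abs := continuous_norm

private noncomputable def s12G {n k : ℕ} (δ : Fin k → Fin n → ℤ) (α : Fin k → ℂ)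
    (κ : Fin n → ℂ) : ℂ → Fin n → ℝ :=
  fun z => LogMap (fun j : Fin n => κ j * ∏ i : Fin k, (z - α i) ^ (-(δ i j)))

variable {n k : ℕ} {δ₀ : Fin n → ℤ} {δ : Fin k → Fin n → ℤ} {α : Fin k → ℂ} {κ : Fin n → ℂ}

private lemma s12_abs_helper {β : Type*} {l : Filter β} {f r : β → ℝ} {L m : ℝ}
    (hm : m ≠ 0) (hf : Tendsto f l atBot ∨ Tendsto f l atTop)
    (hr : Tendsto r l (𝓝 L)) :
    Tendsto (fun x => |m * f x + r x|) l atTop := by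
  have hmf : Tendsto (fun x => m * f x) l atBot ∨ Tendsto (fun x => m * f x) l atTop := by
    rcases hm.lt_or_gt with h | h <;> rcases hf with hf | hf
    · exact Or.inr (hf.const_mul_atBot_of_neg h)
    · exact Or.inl (hf.const_mul_atTop_of_neg h)
    · exact Or.inl (hf.const_mul_atBot h)
    · exact Or.inr (hf.const_mul_atTop h)
  rcases hmf with h | h
  · exact tendsto_abs_atBot_atTop.comp (h.atBot_add hr)
  · exact tendsto_abs_atTop_atTop.comp (h.atTop_add hr)

private lemma s12G_eq (hκ : ∀ j, κ j ≠ 0) {z : ℂ} (hz : ∀ i, z ≠ α i) (j : Fin n) :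
    s12G δ α κ z j = Real.log (Complex.abs (κ j)) +
      ∑ i : Fin k, (-(δ i j) : ℝ) * Real.log (Complex.abs (z - α i)) := by
  have hne : ∀ i, z - α i ≠ 0 := fun i => sub_ne_zero.mpr (hz i)
  show Real.log (Complex.abs (κ j * ∏ i : Fin k, (z - α i) ^ (-(δ i j)))) = _
  rw [map_mul, map_prod, funext fun i => map_zpow₀ Complex.abs (z - α i) (-(δ i j)), Real.log_mul (by simpa using hκ j)
    (Finset.prod_ne_zero_iff.mpr fun i _ =>
      zpow_ne_zero _ ((map_ne_zero Complex.abs).mpr (hne i))),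
    Real.log_prod (fun i _ =>
      zpow_ne_zero _ ((map_ne_zero Complex.abs).mpr (hne i)))]
  congr 1
  refine Finset.sum_congr rfl fun i _ => ?_
  rw [Real.log_zpow]
  push_cast
  ring

private lemma s12G_cont (hκ : ∀ j, κ j ≠ 0) :
    ContinuousOn (s12G δ α κ) {z : ℂ | ∀ i, z ≠ α i} := by
  have : ContinuousOn (fun z : ℂ => fun j : Fin n => Real.log (Complex.abs (κ j)) +
      ∑ i : Fin k, (-(δ i j) : ℝ) * Real.log (Complex.abs (z - α i)))
      {z : ℂ | ∀ i, z ≠ α i} := by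
    rw [continuousOn_pi]
    intro j
    apply ContinuousOn.add continuousOn_const
    apply continuousOn_finset_sum
    intro i _
    apply ContinuousOn.mul continuousOn_const
    apply Real.continuousOn_log.comp ((Complex.continuous_abs.comp (continuous_id.sub continuous_const)).continuousOn)
    intro z hz
    simpa [sub_eq_zero] using hz i
  exact this.congr fun z hz => funext fun j => s12G_eq hκ hz j


private lemma s12_near_puncture (hκ : ∀ j, κ j ≠ 0) (hα : Function.Injective α)
    (hδ : ∀ i, δ i ≠ 0) {K : Set (Fin n → ℝ)} {M : ℝ}
    (hM : ∀ y ∈ K, ∀ j, |y j| ≤ M) (i₀ : Fin k) :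
    ∀ᶠ z in 𝓝[{z : ℂ | ∀ i, z ≠ α i}] (α i₀), s12G δ α κ z ∉ K := by
  set Sset : Set ℂ := {z : ℂ | ∀ i, z ≠ α i} with hSset
  obtain ⟨j, hj⟩ : ∃ j, δ i₀ j ≠ 0 := Function.ne_iff.mp (hδ i₀)
  -- the singular part tends to -∞
  have hlog : Tendsto (fun z : ℂ => Real.log (Complex.abs (z - α i₀)))
      (𝓝[Sset] (α i₀)) atBot := by
    apply Real.tendsto_log_nhdsGT_zero.comp
    rw [tendsto_nhdsWithin_iff]
    constructor
    · have h1 : ContinuousAt (fun z : ℂ => Complex.abs (z - α i₀)) (α i₀) :=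
        (Complex.continuous_abs.comp (continuous_id.sub continuous_const)).continuousAt
      have := h1.tendsto.mono_left (nhdsWithin_le_nhds (s := Sset))
      simpa using this
    · filter_upwards [eventually_mem_nhdsWithin] with z hz
      have : z - α i₀ ≠ 0 := sub_ne_zero.mpr (hz i₀)
      simpa [Set.mem_Ioi] using (AbsoluteValue.pos Complex.abs this)
  -- the regular part converges
  have hrest : Tendsto (fun z : ℂ => Real.log (Complex.abs (κ j)) +
      ∑ i ∈ Finset.univ.erase i₀, (-(δ i j) : ℝ) * Real.log (Complex.abs (z - α i)))
      (𝓝[Sset] (α i₀)) (𝓝 (Real.log (Complex.abs (κ j)) +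
      ∑ i ∈ Finset.univ.erase i₀, (-(δ i j) : ℝ) * Real.log (Complex.abs (α i₀ - α i)))) := by
    apply Tendsto.const_add
    apply tendsto_finset_sum
    intro i hi
    apply Tendsto.const_mul
    have hne' : Complex.abs (α i₀ - α i) ≠ 0 := by
      have : α i₀ ≠ α i := fun h => (Finset.mem_erase.mp hi).1 (hα h).symm
      simpa [sub_eq_zero] using this
    have h2 : ContinuousAt (fun z : ℂ => Complex.abs (z - α i)) (α i₀) :=
      (Complex.continuous_abs.comp (continuous_id.sub continuous_const)).continuousAt
    have hc : ContinuousAt (fun z : ℂ => Real.log (Complex.abs (z - α i))) (α i₀) :=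
      h2.log hne'
    exact hc.tendsto.mono_left nhdsWithin_le_nhds
  have habs : Tendsto (fun z : ℂ => |(-(δ i₀ j) : ℝ) *
      Real.log (Complex.abs (z - α i₀)) +
      (Real.log (Complex.abs (κ j)) +
        ∑ i ∈ Finset.univ.erase i₀, (-(δ i j) : ℝ) * Real.log (Complex.abs (z - α i)))|)
      (𝓝[Sset] (α i₀)) atTop := by
    apply s12_abs_helper _ (Or.inl hlog) hrest
    simpa using hj
  have hcongr : ∀ᶠ z in 𝓝[Sset] (α i₀), |s12G δ α κ z j| = |(-(δ i₀ j) : ℝ) *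
      Real.log (Complex.abs (z - α i₀)) +
      (Real.log (Complex.abs (κ j)) +
        ∑ i ∈ Finset.univ.erase i₀, (-(δ i j) : ℝ) * Real.log (Complex.abs (z - α i)))| := by
    filter_upwards [eventually_mem_nhdsWithin] with z hz
    rw [s12G_eq hκ hz j,
      ← Finset.add_sum_erase _ _ (Finset.mem_univ i₀)]
    ring_nf
  have hT : Tendsto (fun z : ℂ => |s12G δ α κ z j|) (𝓝[Sset] (α i₀)) atTop :=
    habs.congr' (by filter_upwards [hcongr] with z h using h.symm)
  filter_upwards [hT.eventually_gt_atTop M] with z hz hzK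
  exact absurd (hM _ hzK j) (not_le.mpr hz)

private lemma s12_near_infty (hκ : ∀ j, κ j ≠ 0)
    (hΔ : δ₀ + ∑ i : Fin k, δ i = 0) (hδ₀ : δ₀ ≠ 0) {K : Set (Fin n → ℝ)} {M : ℝ}
    (hM : ∀ y ∈ K, ∀ j, |y j| ≤ M) :
    ∀ᶠ z in comap Complex.abs atTop ⊓ 𝓟 {z : ℂ | ∀ i, z ≠ α i},
      s12G δ α κ z ∉ K := by
  set Sset : Set ℂ := {z : ℂ | ∀ i, z ≠ α i} with hSset
  set linf : Filter ℂ := comap Complex.abs atTop ⊓ 𝓟 Sset with hl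
  obtain ⟨j, hj⟩ : ∃ j, δ₀ j ≠ 0 := Function.ne_iff.mp hδ₀
  have hsum : (∑ i : Fin k, (-(δ i j) : ℝ)) = (δ₀ j : ℝ) := by
    have := congrFun hΔ j
    simp only [Pi.add_apply, Finset.sum_apply, Pi.zero_apply] at this
    have h2 : (δ₀ j : ℝ) + ∑ i : Fin k, (δ i j : ℝ) = 0 := by exact_mod_cast this
    rw [Finset.sum_neg_distrib]
    linarith
  have habsT : Tendsto (fun z : ℂ => Complex.abs z) linf atTop :=
    tendsto_comap.mono_left inf_le_left
  have hlogT : Tendsto (fun z : ℂ => Real.log (Complex.abs z)) linf atTop :=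
    Real.tendsto_log_atTop.comp habsT
  -- error terms tend to 0
  have herr : ∀ i : Fin k, Tendsto (fun z : ℂ =>
      Real.log (Complex.abs (z - α i)) - Real.log (Complex.abs z)) linf (𝓝 0) := by
    intro i
    have hcob : linf ≤ Bornology.cobounded ℂ := by
      have heq : comap (⇑Complex.abs) atTop = Bornology.cobounded ℂ := by
        rw [← comap_norm_atTop]
        congr 1
      exact le_trans inf_le_left heq.le
    have hinv : Tendsto (fun z : ℂ => z⁻¹) linf (𝓝 0) :=
      tendsto_inv₀_cobounded.mono_left hcob
    have hq : Tendsto (fun z : ℂ => 1 - α i * z⁻¹) linf (𝓝 1) := by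
      have := tendsto_const_nhds (f := linf) (x := (1 : ℂ)) |>.sub
        (hinv.const_mul (α i))
      simpa using this
    have habs1 : Tendsto (fun z : ℂ => Complex.abs (1 - α i * z⁻¹)) linf (𝓝 1) := by
      have := (Complex.continuous_abs.tendsto 1).comp hq
      simpa [Function.comp_def] using this
    have hlog0 : Tendsto (fun z : ℂ => Real.log (Complex.abs (1 - α i * z⁻¹))) linf (𝓝 0) := by
      have := ((Real.continuousAt_log one_ne_zero).tendsto).comp habs1
      simpa [Function.comp_def] using this
    apply hlog0.congr'
    filter_upwards [habsT.eventually_ge_atTop (Complex.abs (α i) + 1)] with z hz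
    have hz0 : z ≠ 0 := by
      intro h; rw [h] at hz; simp at hz
      nlinarith [Complex.abs.nonneg (α i)]
    have hzi : z - α i ≠ 0 := by
      intro h
      rw [sub_eq_zero] at h
      rw [h] at hz
      nlinarith [Complex.abs.nonneg (α i)]
    have key : (1 : ℂ) - α i * z⁻¹ = (z - α i) * z⁻¹ := by
      rw [sub_mul, mul_inv_cancel₀ hz0]
    rw [key, map_mul, map_inv₀, Real.log_mul ((map_ne_zero Complex.abs).mpr hzi)
      (inv_ne_zero ((map_ne_zero Complex.abs).mpr hz0)), Real.log_inv]
    ring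
  -- the regular part converges
  have hrest : Tendsto (fun z : ℂ => Real.log (Complex.abs (κ j)) +
      ∑ i : Fin k, (-(δ i j) : ℝ) *
        (Real.log (Complex.abs (z - α i)) - Real.log (Complex.abs z))) linf
      (𝓝 (Real.log (Complex.abs (κ j)) + ∑ i : Fin k, (-(δ i j) : ℝ) * 0)) := by
    apply Tendsto.const_add
    exact tendsto_finset_sum _ fun i _ => (herr i).const_mul _
  have habs : Tendsto (fun z : ℂ => |(δ₀ j : ℝ) * Real.log (Complex.abs z) +
      (Real.log (Complex.abs (κ j)) +
        ∑ i : Fin k, (-(δ i j) : ℝ) *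
          (Real.log (Complex.abs (z - α i)) - Real.log (Complex.abs z)))|) linf atTop := by
    apply s12_abs_helper _ (Or.inr hlogT) hrest
    exact_mod_cast hj
  have hcongr : ∀ᶠ z in linf, |s12G δ α κ z j| = |(δ₀ j : ℝ) * Real.log (Complex.abs z) +
      (Real.log (Complex.abs (κ j)) +
        ∑ i : Fin k, (-(δ i j) : ℝ) *
          (Real.log (Complex.abs (z - α i)) - Real.log (Complex.abs z)))| := by
    have hSev : ∀ᶠ z in linf, z ∈ Sset := by
      have : Sset ∈ linf := Filter.le_def.mp inf_le_right _ (mem_principal_self Sset)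
      exact this
    filter_upwards [hSev] with z hz
    rw [s12G_eq hκ hz j]
    congr 1
    have expand : ∑ i : Fin k, (-(δ i j) : ℝ) *
        (Real.log (Complex.abs (z - α i)) - Real.log (Complex.abs z)) =
        (∑ i : Fin k, (-(δ i j) : ℝ) * Real.log (Complex.abs (z - α i))) -
        (∑ i : Fin k, (-(δ i j) : ℝ)) * Real.log (Complex.abs z) := by
      rw [Finset.sum_mul, ← Finset.sum_sub_distrib]
      exact Finset.sum_congr rfl fun i _ => by ring
    rw [expand, hsum]
    ring
  have hT : Tendsto (fun z : ℂ => |s12G δ α κ z j|) linf atTop :=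
    habs.congr' (by filter_upwards [hcongr] with z h using h.symm)
  filter_upwards [hT.eventually_gt_atTop M] with z hz hzK
  exact absurd (hM _ hzK j) (not_le.mpr hz)

private lemma s12_compact_preimage (hκ : ∀ j, κ j ≠ 0) (hα : Function.Injective α)
    (hΔ : δ₀ + ∑ i : Fin k, δ i = 0) (hδ₀ : δ₀ ≠ 0) (hδ : ∀ i, δ i ≠ 0)
    {K : Set (Fin n → ℝ)} (hK : IsCompact K) :
    IsCompact ((fun z : {z : ℂ // ∀ i, z ≠ α i} => s12G δ α κ ↑z) ⁻¹' K) := by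
  set Sset : Set ℂ := {z : ℂ | ∀ i, z ≠ α i} with hSset
  -- a bound on K
  obtain ⟨M, hMK⟩ : ∃ M, K ⊆ Metric.closedBall 0 M := hK.isBounded.subset_closedBall 0
  have hM : ∀ y ∈ K, ∀ j, |y j| ≤ M := by
    intro y hy j
    have h1 : ‖y‖ ≤ M := by simpa [mem_closedBall_zero_iff] using hMK hy
    exact le_trans (norm_le_pi_norm y j) h1
  set C : Set ℂ := {z | z ∈ Sset ∧ s12G δ α κ z ∈ K} with hC
  have hCsub : C ⊆ Sset := fun z hz => hz.1
  -- C is bounded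
  have hbound : ∃ R, ∀ z : ℂ, R ≤ Complex.abs z → z ∈ Sset → s12G δ α κ z ∉ K := by
    have h := s12_near_infty hκ hΔ hδ₀ hM (α := α)
    rw [eventually_inf_principal, eventually_comap, eventually_atTop] at h
    obtain ⟨R, hR⟩ := h
    exact ⟨R, fun z hz => hR (Complex.abs z) hz z rfl⟩
  obtain ⟨R, hR⟩ := hbound
  have hCb : Bornology.IsBounded C := by
    apply (Metric.isBounded_closedBall (x := (0 : ℂ)) (r := R)).subset
    intro z hz
    rw [Metric.mem_closedBall, dist_zero_right]
    by_contra hlt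
    exact hR z (le_of_lt (by simpa [Complex.norm_eq_abs] using not_le.mp hlt)) hz.1 hz.2
  -- C is closed
  have hCclosed : IsClosed C := by
    apply isClosed_of_closure_subset
    intro w hw
    have hwS : w ∈ Sset := by
      intro i hwi
      obtain ⟨U, hUo, hUm, hUsub⟩ := mem_nhdsWithin.mp (s12_near_puncture hκ hα hδ hM i)
      have hCU : C ⊆ Uᶜ := by
        intro z hz hzU
        exact hUsub ⟨hzU, hz.1⟩ hz.2
      exact (closure_minimal hCU hUo.isClosed_compl) hw (hwi ▸ hUm)
    refine ⟨hwS, ?_⟩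
    have hcw : ContinuousWithinAt (s12G δ α κ) C w :=
      (s12G_cont hκ w hwS).mono hCsub
    have hmem := hcw.mem_closure_image hw
    have himg2 : s12G δ α κ '' C ⊆ K := by
      rintro y ⟨z, hz, rfl⟩; exact hz.2
    exact hK.isClosed.closure_subset_iff.mpr himg2 hmem
  have hCcomp : IsCompact C := Metric.isCompact_of_isClosed_isBounded hCclosed hCb
  rw [Subtype.isCompact_iff]
  have himg : ((↑) '' ((fun z : {z : ℂ // ∀ i, z ≠ α i} => s12G δ α κ ↑z) ⁻¹' K) : Set ℂ)
      = C := by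
    ext w
    constructor
    · rintro ⟨z, hzK, rfl⟩
      exact ⟨z.2, hzK⟩
    · rintro ⟨hw, hwK⟩
      exact ⟨⟨w, hw⟩, hwK, rfl⟩
  rw [himg]
  exact hCcomp

/-- Let `δ₀, δ₁, …, δ_k ∈ ℤⁿ` with `δ₀ + ∑ᵢ δᵢ = 0` and all `δᵢ ≠ 0`.
For pairwise distinct punctures `α₁, …, α_k` and `κ_j ∈ ℂ∖{0}`, the map
`Log ∘ f : S → ℝⁿ`, where `S = ℂ∖{α₁,…,α_k}` and `f(z)_j = κ_j ∏ᵢ (z-αᵢ)^{-δᵢʲ}`,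
is proper (preimages of compact sets are compact); in particular the amoeba
`Log(f(S))` is closed in `ℝⁿ`. -/
theorem stmt_12 (n k : ℕ) (hn : 1 ≤ n) (hk : 1 ≤ k)
    (δ₀ : Fin n → ℤ) (δ : Fin k → Fin n → ℤ)
    (hΔ : δ₀ + ∑ i : Fin k, δ i = 0)
    (hδ₀ : δ₀ ≠ 0) (hδ : ∀ i, δ i ≠ 0)
    (α : Fin k → ℂ) (hα : Function.Injective α)
    (κ : Fin n → ℂ) (hκ : ∀ j, κ j ≠ 0) :
    (∀ K : Set (Fin n → ℝ), IsCompact K →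
      IsCompact ((fun z : {z : ℂ // ∀ i, z ≠ α i} =>
        LogMap (fun j : Fin n => κ j * ∏ i : Fin k, ((z : ℂ) - α i) ^ (-(δ i j))))
          ⁻¹' K)) ∧
    IsClosed (Set.range (fun z : {z : ℂ // ∀ i, z ≠ α i} =>
      LogMap (fun j : Fin n => κ j * ∏ i : Fin k, ((z : ℂ) - α i) ^ (-(δ i j))))) := by
  have key : ∀ K : Set (Fin n → ℝ), IsCompact K →
      IsCompact ((fun z : {z : ℂ // ∀ i, z ≠ α i} => s12G δ α κ ↑z) ⁻¹' K) :=
    fun K hK => s12_compact_preimage hκ hα hΔ hδ₀ hδ hK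
  have hcont : Continuous (fun z : {z : ℂ // ∀ i, z ≠ α i} => s12G δ α κ ↑z) :=
    (s12G_cont hκ).restrict
  have hproper : IsProperMap (fun z : {z : ℂ // ∀ i, z ≠ α i} => s12G δ α κ ↑z) :=
    isProperMap_iff_isCompact_preimage.mpr ⟨hcont, fun K hK => key K hK⟩
  constructor
  · exact fun K hK => key K hK
  · have h2 := hproper.isClosedMap univ isClosed_univ
    rw [Set.image_univ] at h2
    exact h2
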